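/- For a finite connected multigraph G with at least 3 vertices, the quotient of 𝔐(G) by the relation ℛ (identifying vertices with equal links that are not joined by an edge) is isomorphic to 𝔐(sG), where sG is the simplification of G obtained by identifying parallel edges. The isomorphism sends the class of (v,e) to (v, ē), ē being the image of e in sG. -/

import Mathlib

/-- A multigraph: edges carry unordered pairs of distinct endpoints (no loops). -/
structure Multigraph (V E : Type*) where
  ends : E → Sym2 V
  not_isDiag : ∀ e, ¬ (ends e).IsDiag

/-- The simplification `sG` of a multigraph `G`: the simple graph on `V_G` in which
`u` and `w` are adjacent iff `G` has at least one edge between them. -/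
def Multigraph.toSimple {V E : Type*} (G : Multigraph V E) : SimpleGraph V where
  Adj u w := u ≠ w ∧ ∃ e, G.ends e = s(u, w)
  symm := by
    constructor
    rintro u w ⟨h, e, he⟩
    exact ⟨h.symm, e, by rw [he, Sym2.eq_swap]⟩
  loopless := ⟨fun u h => h.1 rfl⟩

/-- A multigraph is connected iff its underlying simple graph is. -/
def Multigraph.Connected {V E : Type*} (G : Multigraph V E) : Prop :=
  G.toSimple.Connected

/-- Simplices of the discrete Morse complex `𝔐(G)` of a multigraph `G`. -/
def IsMorseSimplexM {V E : Type*} (G : Multigraph V E) (S : Finset (V × E)) : Prop :=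
  (∀ p ∈ S, p.1 ∈ G.ends p.2) ∧
  (∀ p ∈ S, ∀ q ∈ S, p.1 = q.1 → p = q) ∧
  (∀ p ∈ S, ∀ q ∈ S, p.2 = q.2 → p = q) ∧
  (∀ v : V, ¬ Relation.TransGen
    (fun a b => ∃ e, (a, e) ∈ S ∧ G.ends e = s(a, b)) v v)

/-- The discrete Morse complex `𝔐(G)` of a multigraph, as a family of finite sets. -/
def MCpxM {V E : Type*} (G : Multigraph V E) : Set (Finset (V × E)) :=
  {S | IsMorseSimplexM G S}

/-- Simplices of the discrete Morse complex `𝔐(H)` of a simple graph `H`. -/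
def IsMorseSimplex {V : Type*} (H : SimpleGraph V) (S : Finset (V × V)) : Prop :=
  (∀ p ∈ S, H.Adj p.1 p.2) ∧
  (∀ p ∈ S, ∀ q ∈ S, p.1 = q.1 → p = q) ∧
  (∀ v : V, ¬ Relation.TransGen (fun a b => (a, b) ∈ S) v v)

/-- The link of a vertex `v` in a set-complex `K`. -/
def lkv {A : Type*} [DecidableEq A] (K : Set (Finset A)) (v : A) : Set (Finset A) :=
  {t | v ∉ t ∧ insert v t ∈ K}

/-- The relation `ℛ`: `v ℛ w` iff `v = w`, or `{v,w} ∉ K` and `lk(v,K) = lk(w,K)`. -/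
def Rrel {A : Type*} [DecidableEq A] (K : Set (Finset A)) (v w : A) : Prop :=
  v = w ∨ (({v, w} : Finset A) ∉ K ∧ lkv K v = lkv K w)

/-- The quotient complex `K̃` on the `ℛ`-classes. -/
def qfaces {A : Type*} [DecidableEq A] (K : Set (Finset A)) :
    Set (Finset (Quot (Rrel K))) :=
  {t | ∃ s ∈ K, ∀ x, x ∈ t ↔ ∃ v ∈ s, Quot.mk (Rrel K) v = x}

set_option linter.unusedSectionVars false

section Aux

theorem noCycle_of_rank {V : Type*} {r : V → V → Prop} (φ : V → ℕ)
    (h : ∀ a b, r a b → φ a < φ b) (v : V) : ¬ Relation.TransGen r v v := by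
  intro hv
  have key : ∀ a b, Relation.TransGen r a b → φ a < φ b := by
    intro a b hab
    induction hab with
    | single h1 => exact h _ _ h1
    | tail _ h2 ih => exact ih.trans (h _ _ h2)
  exact lt_irrefl _ (key v v hv)

theorem transGen_congr {V : Type*} {r r' : V → V → Prop}
    (h : ∀ a b, r a b ↔ r' a b) {a b : V} :
    Relation.TransGen r a b ↔ Relation.TransGen r' a b := by
  have : r = r' := funext fun a => funext fun b => propext (h a b)
  rw [this]

variable {V E : Type*} [DecidableEq V] [DecidableEq E] {G : Multigraph V E}

theorem Multigraph.ne_of_ends {e : E} {a b : V} (h : G.ends e = s(a,b)) : a ≠ b := by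
  intro hab
  exact G.not_isDiag e (by rw [h, hab]; exact Sym2.isDiag_iff_proj_eq.mpr rfl)

theorem ends_eq_of_mem {e : E} {a b : V} (ha : a ∈ G.ends e) (hb : b ∈ G.ends e)
    (hab : a ≠ b) : G.ends e = s(a,b) := (Sym2.mem_and_mem_iff hab).mp ⟨ha, hb⟩

theorem empty_mem_MCpxM : (∅ : Finset (V × E)) ∈ MCpxM G := by
  refine ⟨by simp, by simp, by simp, fun v hv => ?_⟩
  exact noCycle_of_rank (fun _ => 0) (fun a b hab => by simp at hab) v hv

theorem singleton_mem_MCpxM {v : V} {e : E} (h : v ∈ G.ends e) :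
    ({(v,e)} : Finset (V × E)) ∈ MCpxM G := by
  refine ⟨by simpa using h, by simp, by simp, fun u hu => ?_⟩
  have hvw : G.ends e = s(v, Sym2.Mem.other' h) := (Sym2.other_spec' h).symm
  have hne : v ≠ Sym2.Mem.other' h := Multigraph.ne_of_ends hvw
  refine noCycle_of_rank (fun x => if x = v then 0 else 1) (fun a b hab => ?_) u hu
  obtain ⟨e', he', heq⟩ := hab
  simp only [Finset.mem_singleton, Prod.mk.injEq] at he'
  obtain ⟨rfl, rfl⟩ := he'
  have hb : b = Sym2.Mem.other' h := Sym2.congr_right.mp (heq.symm.trans hvw)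
  subst hb
  simp [hne.symm, hne]

/-- A reusable constructor for two-element Morse simplices, using a rank function. -/
theorem pair_mem_MCpxM {v w : V} {e f : E} (hvw : v ≠ w) (hef : e ≠ f)
    (hv : v ∈ G.ends e) (hw : w ∈ G.ends f) (φ : V → ℕ)
    (h1 : ∀ y, G.ends e = s(v,y) → φ v < φ y)
    (h2 : ∀ y, G.ends f = s(w,y) → φ w < φ y) :
    ({(v,e),(w,f)} : Finset (V × E)) ∈ MCpxM G := by
  refine ⟨?_, ?_, ?_, fun x hx => ?_⟩
  · intro p hp
    simp only [Finset.mem_insert, Finset.mem_singleton] at hp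
    rcases hp with rfl | rfl <;> assumption
  · intro p hp q hq hpq
    simp only [Finset.mem_insert, Finset.mem_singleton] at hp hq
    rcases hp with rfl | rfl <;> rcases hq with rfl | rfl <;>
      first | rfl | (exact absurd hpq hvw) | (exact absurd hpq hvw.symm)
  · intro p hp q hq hpq
    simp only [Finset.mem_insert, Finset.mem_singleton] at hp hq
    rcases hp with rfl | rfl <;> rcases hq with rfl | rfl <;>
      first | rfl | (exact absurd hpq hef) | (exact absurd hpq hef.symm)
  · refine noCycle_of_rank φ (fun a b hab => ?_) x hx
    obtain ⟨d, hd, hends⟩ := hab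
    simp only [Finset.mem_insert, Finset.mem_singleton, Prod.mk.injEq] at hd
    rcases hd with ⟨rfl, rfl⟩ | ⟨rfl, rfl⟩
    · exact h1 b hends
    · exact h2 b hends

theorem lkv_junk {v : V} {e : E} (h : v ∉ G.ends e) :
    lkv (MCpxM G) (v,e) = ∅ := by
  ext t
  simp only [Set.mem_empty_iff_false, iff_false]
  rintro ⟨hnt, hins⟩
  exact h (hins.1 (v,e) (Finset.mem_insert_self _ _))

theorem lkv_parallel_subset {v : V} {e e' : E} (hee : G.ends e = G.ends e') :
    lkv (MCpxM G) (v,e) ⊆ lkv (MCpxM G) (v,e') := by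
  rintro t ⟨hnt, hins⟩
  obtain ⟨h1, h2, h3, h4⟩ := hins
  have hv : v ∈ G.ends e := h1 (v,e) (Finset.mem_insert_self _ _)
  -- no element of t has first coordinate v
  have hfst : ∀ q ∈ t, q.1 ≠ v := by
    intro q hq hq1
    have := h2 (v,e) (Finset.mem_insert_self _ _) q (Finset.mem_insert_of_mem hq) hq1.symm
    exact hnt (this ▸ hq)
  -- no element of t has edge e'
  have hsnd : ∀ q ∈ t, q.2 ≠ e' := by
    intro q hq hd
    by_cases hee' : e = e'
    · have := h3 (v,e) (Finset.mem_insert_self _ _) q (Finset.mem_insert_of_mem hq)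
        (by rw [hd, ← hee'])
      exact hnt (this ▸ hq)
    · have hu : q.1 ∈ G.ends e := by
        have := h1 q (Finset.mem_insert_of_mem hq)
        rwa [hd, ← hee] at this
      have huv : q.1 ≠ v := hfst q hq
      have hends : G.ends e = s(v, q.1) := ends_eq_of_mem hv hu huv.symm
      have hqmem : (q.1, q.2) ∈ insert (v,e) t := by
        simpa using Finset.mem_insert_of_mem hq
      refine h4 v (Relation.TransGen.tail (.single ⟨e, Finset.mem_insert_self _ _, hends⟩)
        ⟨q.2, hqmem, ?_⟩)
      rw [hd, ← hee, hends, Sym2.eq_swap]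
  refine ⟨fun hmem => (hfst (v,e') hmem) rfl, ?_, ?_, ?_, ?_⟩
  · intro p hp
    rcases Finset.mem_insert.mp hp with rfl | hp
    · exact hee ▸ hv
    · exact h1 p (Finset.mem_insert_of_mem hp)
  · intro p hp q hq hpq
    rcases Finset.mem_insert.mp hp with rfl | hp <;> rcases Finset.mem_insert.mp hq with rfl | hq
    · rfl
    · exact absurd hpq.symm (hfst q hq)
    · exact absurd hpq (hfst p hp)
    · exact h2 p (Finset.mem_insert_of_mem hp) q (Finset.mem_insert_of_mem hq) hpq
  · intro p hp q hq hpq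
    rcases Finset.mem_insert.mp hp with rfl | hp <;> rcases Finset.mem_insert.mp hq with rfl | hq
    · rfl
    · exact absurd hpq.symm (hsnd q hq)
    · exact absurd hpq (hsnd p hp)
    · exact h3 p (Finset.mem_insert_of_mem hp) q (Finset.mem_insert_of_mem hq) hpq
  · intro x hx
    refine h4 x ((transGen_congr (fun a b => ?_)).mpr hx)
    constructor
    · rintro ⟨d, hd, hends⟩
      rcases Finset.mem_insert.mp hd with hd' | hd'
      · rw [Prod.mk.injEq] at hd'
        obtain ⟨rfl, rfl⟩ := hd'
        exact ⟨e', Finset.mem_insert_self _ _, hee ▸ hends⟩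
      · exact ⟨d, Finset.mem_insert_of_mem hd', hends⟩
    · rintro ⟨d, hd, hends⟩
      rcases Finset.mem_insert.mp hd with hd' | hd'
      · rw [Prod.mk.injEq] at hd'
        obtain ⟨rfl, rfl⟩ := hd'
        exact ⟨e, Finset.mem_insert_self _ _, hee.symm ▸ hends⟩
      · exact ⟨d, Finset.mem_insert_of_mem hd', hends⟩

theorem lkv_parallel {v : V} {e e' : E} (hee : G.ends e = G.ends e') :
    lkv (MCpxM G) (v,e) = lkv (MCpxM G) (v,e') :=
  Set.Subset.antisymm (lkv_parallel_subset hee) (lkv_parallel_subset hee.symm)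

end Aux
section Aux2
variable {V E : Type*} [DecidableEq V] [DecidableEq E] {G : Multigraph V E}

/-- If `(v,e)` and `(v,f)` have equal links in `𝔐(G)`, then `e` and `f` are parallel. -/
theorem parallel_of_lkv_eq {v : V} {e f : E}
    (hlk : lkv (MCpxM G) (v,e) = lkv (MCpxM G) (v,f))
    (hv : v ∈ G.ends e) (hvf : v ∈ G.ends f) : G.ends e = G.ends f := by
  by_contra hne
  set a := Sym2.Mem.other' hv with ha_def
  set b := Sym2.Mem.other' hvf with hb_def
  have hea : G.ends e = s(v,a) := (Sym2.other_spec' hv).symm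
  have hfb : G.ends f = s(v,b) := (Sym2.other_spec' hvf).symm
  have hva : v ≠ a := Multigraph.ne_of_ends hea
  have hvb : v ≠ b := Multigraph.ne_of_ends hfb
  have hab : a ≠ b := by
    intro h; exact hne (by rw [hea, hfb, h])
  have hef : e ≠ f := by
    intro h; exact hne (by rw [h])
  have ht1 : ({(b,f)} : Finset (V × E)) ∈ lkv (MCpxM G) (v,e) := by
    constructor
    · simp only [Finset.mem_singleton, Prod.mk.injEq, not_and]
      intro h; exact absurd h hvb
    · have : insert (v,e) ({(b,f)} : Finset (V × E)) = {(v,e),(b,f)} := rfl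
      rw [this]
      refine pair_mem_MCpxM hvb hef hv (by rw [hfb]; exact Sym2.mem_mk_right _ _)
        (fun x => if x = b then 0 else if x = v then 1 else 2) ?_ ?_
      · intro y hy
        have hya : y = a := Sym2.congr_right.mp (hy.symm.trans hea)
        subst hya
        simp [hvb, hab, hva.symm]
      · intro y hy
        have hyb : y = v := by
          have : s(b, y) = s(b, v) := hy.symm.trans (hfb.trans (Sym2.eq_swap))
          exact Sym2.congr_right.mp this
        subst hyb
        simp [hvb]
  rw [hlk] at ht1
  obtain ⟨hn, hins⟩ := ht1
  have := hins.2.2.1 (v,f) (Finset.mem_insert_self _ _)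
    (b,f) (Finset.mem_insert_of_mem (Finset.mem_singleton_self _)) rfl
  rw [Prod.mk.injEq] at this
  exact hvb this.1

theorem walk_escape {H : SimpleGraph V} {v w : V} :
    ∀ {x y : V}, H.Walk x y → (x = v ∨ x = w) → y ≠ v → y ≠ w →
      ∃ a u, (a = v ∨ a = w) ∧ u ≠ v ∧ u ≠ w ∧ H.Adj a u := by
  intro x y p
  induction p with
  | nil =>
    intro hx hy1 hy2
    rcases hx with rfl | rfl
    · exact absurd rfl hy1
    · exact absurd rfl hy2
  | @cons x x' y h q ih =>
    intro hx hy1 hy2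
    by_cases hx' : x' = v ∨ x' = w
    · exact ih hx' hy1 hy2
    · push_neg at hx'
      exact ⟨x, x', hx, hx'.1, hx'.2, h⟩

theorem exists_outside_edge [Fintype V] (hc : G.toSimple.Connected)
    (h3 : 3 ≤ Fintype.card V) (v w : V) :
    ∃ a u, (a = v ∨ a = w) ∧ u ≠ v ∧ u ≠ w ∧ G.toSimple.Adj a u := by
  obtain ⟨z, hzv, hzw⟩ : ∃ z : V, z ≠ v ∧ z ≠ w := by
    by_contra h
    push_neg at h
    have hsub : (Finset.univ : Finset V) ⊆ {v, w} := by
      intro z _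
      by_cases hz : z = v
      · simp [hz]
      · simp [h z hz]
    have := Finset.card_le_card hsub
    have h2 : ({v, w} : Finset V).card ≤ 2 := Finset.card_insert_le _ _ |>.trans (by simp)
    rw [Finset.card_univ] at this
    omega
  obtain ⟨p⟩ := hc.preconnected v z
  exact walk_escape p (Or.inl rfl) hzv hzw

end Aux2
section Aux3
variable {V E : Type*} [Fintype V] [DecidableEq V] [DecidableEq E] {G : Multigraph V E}

/-- Parallel vertices of `𝔐(G)` come from parallel edges: if `(v,e)` and `(w,f)` are
`ℛ`-related genuine vertices of `𝔐(G)`, then `v = w` and `e`, `f` are parallel. -/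
theorem rrel_key (hc : G.toSimple.Connected) (h3 : 3 ≤ Fintype.card V)
    {v w : V} {e f : E} (hR : Rrel (MCpxM G) (v,e) (w,f))
    (hv : v ∈ G.ends e) (hw : w ∈ G.ends f) :
    v = w ∧ G.ends e = G.ends f := by
  rcases hR with heq | ⟨hpair, hlk⟩
  · rw [Prod.mk.injEq] at heq
    exact ⟨heq.1, by rw [heq.2]⟩
  by_cases hvw : v = w
  · subst hvw
    exact ⟨rfl, parallel_of_lkv_eq hlk hv hw⟩
  exfalso
  -- Step 1: both edges join v and w.
  have hends : G.ends e = s(v,w) ∧ G.ends f = s(v,w) := by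
    by_cases hef : e = f
    · subst hef
      have h1 : G.ends e = s(v,w) := ends_eq_of_mem hv hw hvw
      exact ⟨h1, h1⟩
    · -- the pair is excluded from the complex only by a 2-cycle
      set a := Sym2.Mem.other' hv with ha_def
      set b := Sym2.Mem.other' hw with hb_def
      have hea : G.ends e = s(v,a) := (Sym2.other_spec' hv).symm
      have hfb : G.ends f = s(w,b) := (Sym2.other_spec' hw).symm
      have hva : v ≠ a := Multigraph.ne_of_ends hea
      have hwb : w ≠ b := Multigraph.ne_of_ends hfb
      have key : a = w ∧ b = v := by
        by_contra hnot
        apply hpair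
        rcases eq_or_ne a w with haw | haw
        · have hbv : b ≠ v := by
            intro hbv; exact hnot ⟨haw, hbv⟩
          refine pair_mem_MCpxM hvw hef hv hw
            (fun x => if x = v then 0 else if x = w then 1 else 2) ?_ ?_
          · intro y hy
            have : y = a := Sym2.congr_right.mp (hy.symm.trans hea)
            subst this
            rw [haw]
            simp [hvw, Ne.symm hvw]
          · intro y hy
            have : y = b := Sym2.congr_right.mp (hy.symm.trans hfb)
            subst this
            simp [Ne.symm hvw, hbv, Ne.symm hwb]
        · rcases eq_or_ne b v with hbv | hbv
          · refine pair_mem_MCpxM hvw hef hv hw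
              (fun x => if x = w then 0 else if x = v then 1 else 2) ?_ ?_
            · intro y hy
              have : y = a := Sym2.congr_right.mp (hy.symm.trans hea)
              subst this
              simp [hvw, haw, Ne.symm hva]
            · intro y hy
              have : y = b := Sym2.congr_right.mp (hy.symm.trans hfb)
              subst this
              rw [hbv]
              simp [hvw, Ne.symm hvw]
          · refine pair_mem_MCpxM hvw hef hv hw
              (fun x => if x = v ∨ x = w then 0 else 1) ?_ ?_
            · intro y hy
              have : y = a := Sym2.congr_right.mp (hy.symm.trans hea)
              subst this
              simp [Ne.symm hva, haw]
            · intro y hy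
              have : y = b := Sym2.congr_right.mp (hy.symm.trans hfb)
              subst this
              simp [hbv, Ne.symm hwb]
      refine ⟨by rw [hea, key.1], ?_⟩
      rw [hfb, key.2, Sym2.eq_swap]
  obtain ⟨he2, hf2⟩ := hends
  -- Step 2: an edge leaving {v, w} distinguishes the links.
  obtain ⟨aa, u, haa, huv, huw, hadj⟩ := exists_outside_edge hc h3 v w
  simp only [Multigraph.toSimple] at hadj
  obtain ⟨hau, e', he'⟩ := hadj
  rcases haa with rfl | rfl
  · -- aa = v : t = {(v,e')} lies in lk(w,f) but not in lk(v,e)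
    have hfe' : f ≠ e' := by
      intro h
      rw [h, he'] at hf2
      exact huw (Sym2.congr_right.mp hf2)
    have ht : ({(aa,e')} : Finset (V × E)) ∈ lkv (MCpxM G) (w,f) := by
      constructor
      · simp only [Finset.mem_singleton, Prod.mk.injEq, not_and]
        intro h; exact absurd h.symm hvw
      · have : insert (w,f) ({(aa,e')} : Finset (V × E)) = {(w,f),(aa,e')} := rfl
        rw [this]
        refine pair_mem_MCpxM (Ne.symm hvw) hfe' hw
          (by rw [he']; exact Sym2.mem_mk_left _ _)
          (fun x => if x = w then 0 else if x = aa then 1 else 2) ?_ ?_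
        · intro y hy
          have : y = aa := by
            have : s(w, y) = s(w, aa) := hy.symm.trans (hf2.trans Sym2.eq_swap)
            exact Sym2.congr_right.mp this
          subst this
          simp [hvw, Ne.symm hvw]
        · intro y hy
          have : y = u := Sym2.congr_right.mp (hy.symm.trans he')
          subst this
          simp [hvw, huw, huv]
    rw [← hlk] at ht
    obtain ⟨hn, hins⟩ := ht
    have hee' : e ≠ e' := by
      intro h
      rw [h, he'] at he2
      exact huw (Sym2.congr_right.mp he2)
    have := hins.2.1 (aa,e) (Finset.mem_insert_self _ _)
      (aa,e') (Finset.mem_insert_of_mem (Finset.mem_singleton_self _)) rfl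
    rw [Prod.mk.injEq] at this
    exact hee' this.2
  · -- aa = w : t = {(w,e')} lies in lk(v,e) but not in lk(w,f)
    have hee' : e ≠ e' := by
      intro h
      rw [h, he'] at he2
      exact huv (Sym2.congr_right.mp (he2.trans Sym2.eq_swap))
    have ht : ({(aa,e')} : Finset (V × E)) ∈ lkv (MCpxM G) (v,e) := by
      constructor
      · simp only [Finset.mem_singleton, Prod.mk.injEq, not_and]
        intro h; exact absurd h hvw
      · have : insert (v,e) ({(aa,e')} : Finset (V × E)) = {(v,e),(aa,e')} := rfl
        rw [this]
        refine pair_mem_MCpxM hvw hee' hv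
          (by rw [he']; exact Sym2.mem_mk_left _ _)
          (fun x => if x = v then 0 else if x = aa then 1 else 2) ?_ ?_
        · intro y hy
          have : y = aa := Sym2.congr_right.mp (hy.symm.trans he2)
          subst this
          simp [hvw, Ne.symm hvw]
        · intro y hy
          have : y = u := Sym2.congr_right.mp (hy.symm.trans he')
          subst this
          simp [Ne.symm hvw, huw, huv]
    rw [hlk] at ht
    obtain ⟨hn, hins⟩ := ht
    have hfe' : f ≠ e' := by
      intro h
      rw [h, he'] at hf2
      exact huv (Sym2.congr_right.mp (hf2.trans Sym2.eq_swap))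
    have := hins.2.1 (aa,f) (Finset.mem_insert_self _ _)
      (aa,e') (Finset.mem_insert_of_mem (Finset.mem_singleton_self _)) rfl
    rw [Prod.mk.injEq] at this
    exact hfe' this.2

end Aux3
section Aux4
variable {V E : Type*} [DecidableEq V] [DecidableEq E] {G : Multigraph V E}

theorem rrel_symm {A : Type*} [DecidableEq A] {K : Set (Finset A)} {a b : A}
    (h : Rrel K a b) : Rrel K b a := by
  rcases h with rfl | ⟨h1, h2⟩
  · exact Or.inl rfl
  · exact Or.inr ⟨by rwa [Finset.pair_comm], h2.symm⟩

theorem real_of_rrel {p q : V × E} (h : Rrel (MCpxM G) p q)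
    (hp : p.1 ∈ G.ends p.2) : q.1 ∈ G.ends q.2 := by
  rcases h with rfl | ⟨_, hlk⟩
  · exact hp
  · have h0 : (∅ : Finset (V × E)) ∈ lkv (MCpxM G) p := by
      refine ⟨Finset.notMem_empty _, ?_⟩
      have : insert p (∅ : Finset (V × E)) = {(p.1, p.2)} := by simp
      rw [this]
      exact singleton_mem_MCpxM hp
    rw [hlk] at h0
    exact h0.2.1 q (Finset.mem_insert_self _ _)

theorem rrel_of_parallel {v : V} {e f : E} (h : G.ends e = G.ends f) :
    Rrel (MCpxM G) (v,e) (v,f) := by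
  rcases eq_or_ne e f with rfl | hef
  · exact Or.inl rfl
  · refine Or.inr ⟨?_, lkv_parallel h⟩
    intro hmem
    have := hmem.2.1 (v,e) (Finset.mem_insert_self _ _)
      (v,f) (Finset.mem_insert_of_mem (Finset.mem_singleton_self _)) rfl
    rw [Prod.mk.injEq] at this
    exact hef this.2

end Aux4
/-- For a finite connected multigraph `G` with at least three vertices, the quotient of
`𝔐(G)` by `ℛ` is isomorphic to `𝔐(sG)`, via the map sending the class of `(v, e)` to
the oriented edge `(v, w)` of `sG`, where `w` is the other endpoint of `e`. -/
theorem stmt_12 {V E : Type*} [Fintype V] [DecidableEq V] [Fintype E] [DecidableEq E]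
    (G : Multigraph V E) (hc : G.Connected) (h3 : 3 ≤ Fintype.card V) :
    ∃ g : Quot (Rrel (MCpxM G)) → V × V,
      (∀ (v w : V) (e : E), G.ends e = s(v, w) →
        g (Quot.mk (Rrel (MCpxM G)) (v, e)) = (v, w)) ∧
      Set.InjOn g {x | ∃ p : V × E, p.1 ∈ G.ends p.2 ∧ Quot.mk (Rrel (MCpxM G)) p = x} ∧
      (∀ t : Finset (Quot (Rrel (MCpxM G))),
        t ∈ qfaces (MCpxM G) ↔
          ∃ u : Finset (V × V), IsMorseSimplex G.toSimple u ∧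
            ∀ p : V × V, p ∈ u ↔ ∃ x ∈ t, g x = p) := by
  classical
  have hVne : Nonempty V := Fintype.card_pos_iff.mp (by omega)
  obtain ⟨v₀⟩ := hVne
  -- the vertex map
  let fm : V × E → V × V :=
    fun p => if h : p.1 ∈ G.ends p.2 then (p.1, Sym2.Mem.other' h) else (v₀, v₀)
  have hfm_real : ∀ (p : V × E) (h : p.1 ∈ G.ends p.2),
      fm p = (p.1, Sym2.Mem.other' h) := fun p h => dif_pos h
  have hfm_junk : ∀ p : V × E, ¬ p.1 ∈ G.ends p.2 → fm p = (v₀, v₀) :=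
    fun p h => dif_neg h
  have hfm_spec : ∀ (v w : V) (e : E), G.ends e = s(v,w) → fm (v,e) = (v,w) := by
    intro v w e he
    have hv : v ∈ G.ends e := by rw [he]; exact Sym2.mem_mk_left _ _
    rw [hfm_real (v,e) hv]
    have : s(v, Sym2.Mem.other' hv) = s(v,w) := (Sym2.other_spec' hv).trans he
    rw [Sym2.congr_right.mp this]
  have hresp : ∀ p q : V × E, Rrel (MCpxM G) p q → fm p = fm q := by
    rintro ⟨pv, pe⟩ ⟨qv, qe⟩ hR
    by_cases hp : pv ∈ G.ends pe
    · have hq : qv ∈ G.ends qe := real_of_rrel hR hp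
      obtain ⟨h1, h2⟩ := rrel_key hc h3 hR hp hq
      subst h1
      rw [hfm_real (pv, pe) hp, hfm_real (pv, qe) hq]
      have : s(pv, Sym2.Mem.other' hp) = s(pv, Sym2.Mem.other' hq) :=
        (Sym2.other_spec' hp).trans (h2.trans (Sym2.other_spec' hq).symm)
      rw [Sym2.congr_right.mp this]
    · have hq : ¬ qv ∈ G.ends qe := fun hq => hp (real_of_rrel (rrel_symm hR) hq)
      rw [hfm_junk _ hp, hfm_junk _ hq]
  let g : Quot (Rrel (MCpxM G)) → V × V := Quot.lift fm hresp
  have hInj : Set.InjOn g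
      {x | ∃ p : V × E, p.1 ∈ G.ends p.2 ∧ Quot.mk (Rrel (MCpxM G)) p = x} := by
    rintro x ⟨⟨pv, pe⟩, hp, rfl⟩ y ⟨⟨qv, qe⟩, hq, rfl⟩ hxy
    have hfq : fm (pv, pe) = fm (qv, qe) := hxy
    rw [hfm_real (pv, pe) hp, hfm_real (qv, qe) hq, Prod.mk.injEq] at hfq
    obtain ⟨h1, h2⟩ := hfq
    subst h1
    have hpar : G.ends pe = G.ends qe := by
      rw [← Sym2.other_spec' hp, ← Sym2.other_spec' hq, h2]
    exact Quot.sound (rrel_of_parallel hpar)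
  refine ⟨g, fun v w e he => hfm_spec v w e he, hInj, ?_⟩
  intro t
  constructor
  · -- forward
    rintro ⟨s, hs, hst⟩
    have hs' : IsMorseSimplexM G s := hs
    have hrelchar : ∀ a b : V,
        ((a,b) ∈ s.image fm) ↔ ∃ e, (a,e) ∈ s ∧ G.ends e = s(a,b) := by
      intro a b
      constructor
      · intro hmem
        obtain ⟨⟨x, e⟩, hxe, hfeq⟩ := Finset.mem_image.mp hmem
        have hx : x ∈ G.ends e := hs'.1 _ hxe
        rw [hfm_real (x, e) hx, Prod.mk.injEq] at hfeq
        obtain ⟨rfl, rfl⟩ := hfeq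
        exact ⟨e, hxe, (Sym2.other_spec' hx).symm⟩
      · rintro ⟨e, he, hends⟩
        exact Finset.mem_image.mpr ⟨(a,e), he, hfm_spec a b e hends⟩
    refine ⟨s.image fm, ⟨?_, ?_, ?_⟩, ?_⟩
    · intro p hp
      obtain ⟨x, hx, rfl⟩ := Finset.mem_image.mp hp
      have hx1 : x.1 ∈ G.ends x.2 := hs'.1 _ hx
      rw [hfm_real x hx1]
      simp only [Multigraph.toSimple]
      exact ⟨Multigraph.ne_of_ends (Sym2.other_spec' hx1).symm, x.2,
        (Sym2.other_spec' hx1).symm⟩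
    · intro p hp q hq hpq
      obtain ⟨x1, hx1, rfl⟩ := Finset.mem_image.mp hp
      obtain ⟨x2, hx2, rfl⟩ := Finset.mem_image.mp hq
      have h1 : x1.1 ∈ G.ends x1.2 := hs'.1 _ hx1
      have h2 : x2.1 ∈ G.ends x2.2 := hs'.1 _ hx2
      rw [hfm_real x1 h1, hfm_real x2 h2] at hpq ⊢
      obtain rfl := hs'.2.1 x1 hx1 x2 hx2 hpq
      rfl
    · intro x hx
      exact hs'.2.2.2 x ((transGen_congr fun a b => hrelchar a b).mp hx)
    · intro p
      constructor
      · intro hp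
        obtain ⟨q, hq, rfl⟩ := Finset.mem_image.mp hp
        exact ⟨Quot.mk _ q, (hst _).mpr ⟨q, hq, rfl⟩, rfl⟩
      · rintro ⟨x, hxt, rfl⟩
        obtain ⟨q, hq, hqx⟩ := (hst x).mp hxt
        subst hqx
        exact Finset.mem_image.mpr ⟨q, hq, rfl⟩
  · -- backward
    rintro ⟨u, hu, hup⟩
    rcases Finset.eq_empty_or_nonempty u with rfl | ⟨p₀, hp₀⟩
    · have ht : t = ∅ := by
        rw [Finset.eq_empty_iff_forall_notMem]
        intro x hx
        exact absurd ((hup (g x)).mpr ⟨x, hx, rfl⟩) (Finset.notMem_empty _)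
      subst ht
      exact ⟨∅, empty_mem_MCpxM, by simp⟩
    · have hadj : ∀ p ∈ u, p.1 ≠ p.2 ∧ ∃ e, G.ends e = s(p.1, p.2) :=
        fun p hp => by
          have h := hu.1 p hp; simp only [Multigraph.toSimple] at h; exact h
      have he₀ := (hadj p₀ hp₀).2
      let ec : V × V → E :=
        fun p => if h : ∃ e, G.ends e = s(p.1, p.2) then h.choose else he₀.choose
      have hec : ∀ p ∈ u, G.ends (ec p) = s(p.1, p.2) := by
        intro p hp
        have h := (hadj p hp).2
        show G.ends (if h : ∃ e, G.ends e = s(p.1, p.2) then h.choose else he₀.choose)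
          = s(p.1, p.2)
        rw [dif_pos h]
        exact h.choose_spec
      have hne2 : ∀ p ∈ u, p.1 ≠ p.2 := fun p hp => (hadj p hp).1
      set s : Finset (V × E) := u.image (fun p => (p.1, ec p)) with hs_def
      have hrel2 : ∀ a b : V, (∃ e, (a,e) ∈ s ∧ G.ends e = s(a,b)) ↔ (a,b) ∈ u := by
        intro a b
        constructor
        · rintro ⟨e, hes, hends⟩
          obtain ⟨p, hp, heq⟩ := Finset.mem_image.mp hes
          rw [Prod.mk.injEq] at heq
          obtain ⟨h1, h2⟩ := heq
          have hpe : s(p.1, p.2) = s(a, b) := by rw [← hec p hp, h2, hends]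
          rw [h1] at hpe
          have hb : p.2 = b := Sym2.congr_right.mp hpe
          have hpab : p = (a, b) := Prod.ext h1 hb
          rwa [← hpab]
        · intro h
          exact ⟨ec (a,b), Finset.mem_image.mpr ⟨(a,b), h, rfl⟩, hec (a,b) h⟩
      have hsK : s ∈ MCpxM G := by
        refine ⟨?_, ?_, ?_, ?_⟩
        · intro q hq
          obtain ⟨p, hp, rfl⟩ := Finset.mem_image.mp hq
          show p.1 ∈ G.ends (ec p)
          rw [hec p hp]
          exact Sym2.mem_mk_left _ _
        · intro q1 h1 q2 h2 h12
          obtain ⟨p, hp, rfl⟩ := Finset.mem_image.mp h1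
          obtain ⟨p', hp', rfl⟩ := Finset.mem_image.mp h2
          have hpp : p = p' := hu.2.1 p hp p' hp' h12
          rw [hpp]
        · intro q1 h1 q2 h2 h12
          obtain ⟨p, hp, rfl⟩ := Finset.mem_image.mp h1
          obtain ⟨p', hp', rfl⟩ := Finset.mem_image.mp h2
          have hpe : s(p.1, p.2) = s(p'.1, p'.2) := by
            rw [← hec p hp, ← hec p' hp']
            exact congrArg G.ends h12
          rcases Sym2.eq_iff.mp hpe with ⟨ha, hb⟩ | ⟨ha, hb⟩
          · rw [Prod.ext ha hb]
          · exfalso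
            have hp'' : p' = (p.2, p.1) := Prod.ext hb.symm ha.symm
            have hpv : ((p.2, p.1) : V × V) ∈ u := hp'' ▸ hp'
            exact hu.2.2 p.1 ((Relation.TransGen.single
              (show ((p.1, p.2) : V × V) ∈ u by simpa using hp)).tail hpv)
        · intro x hx
          exact hu.2.2 x ((transGen_congr hrel2).mp hx)
      refine ⟨s, hsK, ?_⟩
      intro x
      constructor
      · intro hx
        have hgx : g x ∈ u := (hup (g x)).mpr ⟨x, hx, rfl⟩
        obtain ⟨q, rfl⟩ := Quot.exists_rep x
        by_cases hq : q.1 ∈ G.ends q.2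
        · have hfq : fm q = (q.1, Sym2.Mem.other' hq) := hfm_real q hq
          have hgx' : ((q.1, Sym2.Mem.other' hq) : V × V) ∈ u := by
            have hgq : g (Quot.mk _ q) = fm q := rfl
            rwa [hgq, hfq] at hgx
          refine ⟨(q.1, ec (q.1, Sym2.Mem.other' hq)),
            Finset.mem_image.mpr ⟨(q.1, Sym2.Mem.other' hq), hgx', rfl⟩, ?_⟩
          have hreal' : (q.1, ec (q.1, Sym2.Mem.other' hq)).1
              ∈ G.ends (q.1, ec (q.1, Sym2.Mem.other' hq)).2 := by
            show q.1 ∈ G.ends (ec (q.1, Sym2.Mem.other' hq))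
            rw [hec _ hgx']
            exact Sym2.mem_mk_left _ _
          refine hInj ⟨_, hreal', rfl⟩ ⟨q, hq, rfl⟩ ?_
          show fm (q.1, ec (q.1, Sym2.Mem.other' hq)) = fm q
          rw [hfm_spec _ _ _ (hec _ hgx'), hfq]
        · exfalso
          have hjunk : g (Quot.mk _ q) = (v₀, v₀) := hfm_junk q hq
          rw [hjunk] at hgx
          exact hne2 _ hgx rfl
      · rintro ⟨q, hqs, rfl⟩
        obtain ⟨p, hp, rfl⟩ := Finset.mem_image.mp hqs
        have hgq : g (Quot.mk (Rrel (MCpxM G)) (p.1, ec p)) = (p.1, p.2) :=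
          hfm_spec _ _ _ (hec p hp)
        obtain ⟨x, hxt, hgxp⟩ := (hup (p.1, p.2)).mp (by simpa using hp)
        obtain ⟨q2, rfl⟩ := Quot.exists_rep x
        by_cases hq2 : q2.1 ∈ G.ends q2.2
        · have heq : Quot.mk (Rrel (MCpxM G)) (p.1, ec p)
              = Quot.mk (Rrel (MCpxM G)) q2 := by
            refine hInj ⟨(p.1, ec p), ?_, rfl⟩ ⟨q2, hq2, rfl⟩ ?_
            · show p.1 ∈ G.ends (ec p)
              rw [hec p hp]
              exact Sym2.mem_mk_left _ _
            · show fm (p.1, ec p) = fm q2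
              rw [hfm_spec _ _ _ (hec p hp)]
              exact hgxp.symm
          rw [heq]
          exact hxt
        · exfalso
          have hjunk : g (Quot.mk _ q2) = (v₀, v₀) := hfm_junk q2 hq2
          rw [hjunk, Prod.mk.injEq] at hgxp
          exact hne2 p hp (hgxp.1.symm.trans hgxp.2)
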